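/- In the setting of the previous statement, with P := I_d − (a−A)MΦ⁻¹Mᵀ, one has e^{−sΓ} = P + (a−A)M e^{−sΦ} Φ⁻¹Mᵀ for all s ≥ 0; and since all eigenvalues of Φ have positive real part, e^{−sΓ} → P as s → ∞. -/

import Mathlib

open Matrix

open Filter


noncomputable def mulRightCLM {p q r : ℕ} (X : Matrix (Fin q) (Fin r) ℝ) :
    Matrix (Fin p) (Fin q) ℝ →L[ℝ] Matrix (Fin p) (Fin r) ℝ :=
  LinearMap.toContinuousLinearMap
    { toFun := fun Z => Z * X
      map_add' := fun Z W => Matrix.add_mul Z W X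
      map_smul' := fun c Z => Matrix.smul_mul c Z X }

noncomputable def mulLeftCLM {p q r : ℕ} (X : Matrix (Fin p) (Fin q) ℝ) :
    Matrix (Fin q) (Fin r) ℝ →L[ℝ] Matrix (Fin p) (Fin r) ℝ :=
  LinearMap.toContinuousLinearMap
    { toFun := fun Z => X * Z
      map_add' := fun Z W => Matrix.mul_add X Z W
      map_smul' := fun c Z => Matrix.mul_smul X c Z }

@[simp] lemma mulRightCLM_apply {p q r : ℕ} (X : Matrix (Fin q) (Fin r) ℝ)
    (Z : Matrix (Fin p) (Fin q) ℝ) : mulRightCLM X Z = Z * X := rfl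

@[simp] lemma mulLeftCLM_apply {p q r : ℕ} (X : Matrix (Fin p) (Fin q) ℝ)
    (Z : Matrix (Fin q) (Fin r) ℝ) : mulLeftCLM X Z = X * Z := rfl

lemma exp_mul_eq_self {n : ℕ} (B Q : Matrix (Fin n) (Fin n) ℝ) (h : B * Q = 0) :
    NormedSpace.exp B * Q = Q := by
  letI : NormedRing (Matrix (Fin n) (Fin n) ℝ) := Matrix.linftyOpNormedRing
  letI : NormedAlgebra ℝ (Matrix (Fin n) (Fin n) ℝ) := Matrix.linftyOpNormedAlgebra
  have hs := NormedSpace.expSeries_summable' (𝕂 := ℝ) B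
  rw [NormedSpace.exp_eq_tsum (𝕂 := ℝ)]
  have := ((mulRightCLM (p := n) Q).map_tsum hs).symm
  simp only [mulRightCLM_apply] at this
  rw [← this]
  have hterm : ∀ m : ℕ, ((m.factorial : ℝ)⁻¹ • B ^ m) * Q
      = if m = 0 then Q else 0 := by
    intro m
    cases m with
    | zero => simp
    | succ m =>
      simp only [Nat.succ_ne_zero, if_false]
      rw [smul_mul_assoc, pow_succ, Matrix.mul_assoc, h, Matrix.mul_zero, smul_zero]
  calc (∑' m : ℕ, ((m.factorial : ℝ)⁻¹ • B ^ m) * Q)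
      = ∑' m : ℕ, (if m = 0 then Q else 0) := by
        exact tsum_congr hterm
    _ = Q := by
        rw [tsum_eq_single 0]
        · simp
        · intro b hb; simp [hb]

lemma pow_mul_left {p q : ℕ} (X : Matrix (Fin p) (Fin q) ℝ) (Y : Matrix (Fin q) (Fin p) ℝ)
    (n : ℕ) : (X * Y) ^ n * X = X * (Y * X) ^ n := by
  induction n with
  | zero => simp
  | succ n ih =>
    rw [pow_succ, pow_succ, Matrix.mul_assoc, Matrix.mul_assoc X Y X, ← Matrix.mul_assoc _ X (Y*X),
      ih, Matrix.mul_assoc]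

lemma exp_intertwine {p q : ℕ} (X : Matrix (Fin p) (Fin q) ℝ) (Y : Matrix (Fin q) (Fin p) ℝ)
    (s : ℝ) :
    NormedSpace.exp (s • (X * Y)) * X = X * NormedSpace.exp (s • (Y * X)) := by
  letI : NormedRing (Matrix (Fin p) (Fin p) ℝ) := Matrix.linftyOpNormedRing
  letI : NormedAlgebra ℝ (Matrix (Fin p) (Fin p) ℝ) := Matrix.linftyOpNormedAlgebra
  letI : NormedRing (Matrix (Fin q) (Fin q) ℝ) := Matrix.linftyOpNormedRing
  letI : NormedAlgebra ℝ (Matrix (Fin q) (Fin q) ℝ) := Matrix.linftyOpNormedAlgebra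
  have hs1 := NormedSpace.expSeries_summable' (𝕂 := ℝ) (s • (X * Y))
  have hs2 := NormedSpace.expSeries_summable' (𝕂 := ℝ) (s • (Y * X))
  rw [NormedSpace.exp_eq_tsum (𝕂 := ℝ), NormedSpace.exp_eq_tsum (𝕂 := ℝ)]
  have h1 := ((mulRightCLM (p := p) X).map_tsum hs1).symm
  have h2 := ((mulLeftCLM (r := q) X).map_tsum hs2).symm
  simp only [mulRightCLM_apply, mulLeftCLM_apply] at h1 h2
  rw [← h1, ← h2]
  refine tsum_congr fun n => ?_
  simp only [smul_pow, smul_smul]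
  rw [Matrix.smul_mul, Matrix.mul_smul, pow_mul_left]

lemma key_identity {d k : ℕ} (X : Matrix (Fin d) (Fin k) ℝ) (Y : Matrix (Fin k) (Fin d) ℝ)
    (h : IsUnit (Y * X).det) (s : ℝ) :
    NormedSpace.exp (s • (X * Y))
      = (1 - X * (Y * X)⁻¹ * Y) + X * NormedSpace.exp (s • (Y * X)) * (Y * X)⁻¹ * Y := by
  have habsorb : X * Y * (X * (Y * X)⁻¹ * Y) = X * Y := by
    simp only [Matrix.mul_assoc]
    rw [← Matrix.mul_assoc Y X, ← Matrix.mul_assoc (Y * X), Matrix.mul_nonsing_inv _ h,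
      Matrix.one_mul]
  have hP0 : (s • (X * Y)) * (1 - X * (Y * X)⁻¹ * Y) = 0 := by
    rw [Matrix.smul_mul, Matrix.mul_sub, Matrix.mul_one, habsorb, sub_self, smul_zero]
  have e1 := exp_mul_eq_self (s • (X * Y)) (1 - X * (Y * X)⁻¹ * Y) hP0
  have e2 := exp_intertwine X Y s
  calc NormedSpace.exp (s • (X * Y))
      = NormedSpace.exp (s • (X * Y)) * ((1 - X * (Y * X)⁻¹ * Y) + X * (Y * X)⁻¹ * Y) := by
        rw [sub_add_cancel, Matrix.mul_one]
    _ = NormedSpace.exp (s • (X * Y)) * (1 - X * (Y * X)⁻¹ * Y)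
        + NormedSpace.exp (s • (X * Y)) * (X * (Y * X)⁻¹ * Y) := by
        rw [Matrix.mul_add]
    _ = (1 - X * (Y * X)⁻¹ * Y) + X * NormedSpace.exp (s • (Y * X)) * (Y * X)⁻¹ * Y := by
        rw [e1]
        congr 1
        rw [← Matrix.mul_assoc, ← Matrix.mul_assoc, e2]

noncomputable def evCLM {n : ℕ} (x : Fin n → ℝ) (i : Fin n) :
    Matrix (Fin n) (Fin n) ℝ →L[ℝ] ℝ :=
  LinearMap.toContinuousLinearMap
    { toFun := fun Z => Z.mulVec x i
      map_add' := by intro Z W; simp [Matrix.add_mulVec]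
      map_smul' := by intro c Z; simp [Matrix.smul_mulVec] }

@[simp] lemma evCLM_apply {n : ℕ} (x : Fin n → ℝ) (i : Fin n)
    (Z : Matrix (Fin n) (Fin n) ℝ) : evCLM x i Z = Z.mulVec x i := rfl

lemma skew_quad {d : ℕ} (A : Matrix (Fin d) (Fin d) ℝ) (hA : Aᵀ = -A) (v : Fin d → ℝ) :
    v ⬝ᵥ A.mulVec v = 0 := by
  have h1 : v ⬝ᵥ A.mulVec v = -(v ⬝ᵥ A.mulVec v) := by
    conv_lhs => rw [Matrix.dotProduct_mulVec, ← Matrix.mulVec_transpose, hA, Matrix.neg_mulVec,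
      neg_dotProduct, dotProduct_comm]
  linarith

lemma quad_eq {d k : ℕ} (a A : Matrix (Fin d) (Fin d) ℝ) (M : Matrix (Fin d) (Fin k) ℝ)
    (hA : Aᵀ = -A) (x : Fin k → ℝ) :
    x ⬝ᵥ (Mᵀ * (a - A) * M).mulVec x = (M.mulVec x) ⬝ᵥ a.mulVec (M.mulVec x) := by
  rw [← Matrix.mulVec_mulVec, ← Matrix.mulVec_mulVec, Matrix.dotProduct_mulVec,
    Matrix.vecMul_transpose, Matrix.sub_mulVec, dotProduct_sub,
    skew_quad A hA (M.mulVec x), sub_zero]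

lemma quad_pos {d k : ℕ} (a A : Matrix (Fin d) (Fin d) ℝ) (M : Matrix (Fin d) (Fin k) ℝ)
    (ha : a.PosDef) (hA : Aᵀ = -A) (hM : Function.Injective M.mulVec)
    (x : Fin k → ℝ) (hx : x ≠ 0) : 0 < x ⬝ᵥ (Mᵀ * (a - A) * M).mulVec x := by
  rw [quad_eq a A M hA]
  have hMx : M.mulVec x ≠ 0 := by
    intro h
    exact hx (hM (h.trans (Matrix.mulVec_zero M).symm))
  have := ha.dotProduct_mulVec_pos hMx
  simpa using this

lemma phi_isUnit {d k : ℕ} (a A : Matrix (Fin d) (Fin d) ℝ) (M : Matrix (Fin d) (Fin k) ℝ)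
    (ha : a.PosDef) (hA : Aᵀ = -A) (hM : Function.Injective M.mulVec) :
    IsUnit (Mᵀ * (a - A) * M).det := by
  rw [← Matrix.isUnit_iff_isUnit_det, ← Matrix.mulVec_injective_iff_isUnit]
  intro x y hxy
  by_contra hne
  have hz : (Mᵀ * (a - A) * M).mulVec (x - y) = 0 := by
    rw [Matrix.mulVec_sub, hxy, sub_self]
  have h0 : (x - y) ⬝ᵥ (Mᵀ * (a - A) * M).mulVec (x - y) = 0 := by
    rw [hz, dotProduct_zero]
  have := quad_pos a A M ha hA hM (x - y) (sub_ne_zero.mpr hne)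
  linarith

lemma coercive {k : ℕ} (Φ : Matrix (Fin k) (Fin k) ℝ)
    (hpos : ∀ x : Fin k → ℝ, x ≠ 0 → 0 < x ⬝ᵥ Φ.mulVec x) :
    ∃ c : ℝ, 0 < c ∧ ∀ x : Fin k → ℝ, c * (∑ i, x i ^ 2) ≤ x ⬝ᵥ Φ.mulVec x := by
  rcases Nat.eq_zero_or_pos k with hk | hk
  · subst hk
    refine ⟨1, one_pos, fun x => ?_⟩
    simp [dotProduct]
  · haveI : Nonempty (Fin k) := ⟨⟨0, hk⟩⟩
    have hsne : (Metric.sphere (0 : Fin k → ℝ) 1).Nonempty :=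
      NormedSpace.sphere_nonempty.mpr zero_le_one
    have hcont : Continuous fun x : Fin k → ℝ => x ⬝ᵥ Φ.mulVec x := by
      simp only [dotProduct, Matrix.mulVec]
      apply continuous_finset_sum
      intro i _
      exact (continuous_apply i).mul
        (continuous_finset_sum _ fun j _ => continuous_const.mul (continuous_apply j))
    obtain ⟨x₀, hx₀S, hmin⟩ :=
      (isCompact_sphere (0 : Fin k → ℝ) 1).exists_isMinOn hsne hcont.continuousOn
    have hx₀norm : ‖x₀‖ = 1 := by simpa using hx₀S
    have hx₀ne : x₀ ≠ 0 := by
      intro h; rw [h] at hx₀norm; simp at hx₀norm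
    set c₀ := x₀ ⬝ᵥ Φ.mulVec x₀ with hc₀
    have hc₀pos : 0 < c₀ := hpos x₀ hx₀ne
    refine ⟨c₀ / k, div_pos hc₀pos (by exact_mod_cast hk), fun x => ?_⟩
    by_cases hx : x = 0
    · simp [hx]
    · have hnx : 0 < ‖x‖ := norm_pos_iff.2 hx
      have hxS : ‖x‖⁻¹ • x ∈ Metric.sphere (0 : Fin k → ℝ) 1 := by
        simp [norm_smul, abs_of_pos (inv_pos.mpr hnx), inv_mul_cancel₀ hnx.ne']
      have h1 : c₀ ≤ (‖x‖⁻¹ • x) ⬝ᵥ Φ.mulVec (‖x‖⁻¹ • x) := hmin hxS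
      have h2 : (‖x‖⁻¹ • x) ⬝ᵥ Φ.mulVec (‖x‖⁻¹ • x)
          = (‖x‖⁻¹)^2 * (x ⬝ᵥ Φ.mulVec x) := by
        rw [Matrix.mulVec_smul, dotProduct_smul, smul_dotProduct]
        simp [smul_eq_mul]; ring
      have h3 : c₀ * ‖x‖ ^ 2 ≤ x ⬝ᵥ Φ.mulVec x := by
        rw [h2] at h1
        have := mul_le_mul_of_nonneg_right h1 (le_of_lt (pow_pos hnx 2))
        calc c₀ * ‖x‖ ^ 2 ≤ (‖x‖⁻¹) ^ 2 * (x ⬝ᵥ Φ.mulVec x) * ‖x‖ ^ 2 := this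
          _ = x ⬝ᵥ Φ.mulVec x := by field_simp
      have h4 : (∑ i, x i ^ 2) ≤ (k : ℝ) * ‖x‖ ^ 2 := by
        calc (∑ i, x i ^ 2) ≤ ∑ _i : Fin k, ‖x‖ ^ 2 := by
              apply Finset.sum_le_sum
              intro i _
              rw [← sq_abs]
              exact pow_le_pow_left₀ (abs_nonneg _) (norm_le_pi_norm x i) 2
          _ = (k : ℝ) * ‖x‖ ^ 2 := by simp [Finset.sum_const, mul_comm]
      calc c₀ / k * ∑ i, x i ^ 2 ≤ c₀ / k * ((k : ℝ) * ‖x‖ ^ 2) := by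
            apply mul_le_mul_of_nonneg_left h4
            positivity
        _ = c₀ * ‖x‖ ^ 2 := by
            field_simp
        _ ≤ x ⬝ᵥ Φ.mulVec x := h3

lemma decay {k : ℕ} (Φ : Matrix (Fin k) (Fin k) ℝ) {c : ℝ} (hc : 0 < c)
    (hco : ∀ x : Fin k → ℝ, c * (∑ i, x i ^ 2) ≤ x ⬝ᵥ Φ.mulVec x) (i j : Fin k) :
    Tendsto (fun s : ℝ => NormedSpace.exp ((-s) • Φ) i j) atTop (nhds 0) := by
  letI : NormedRing (Matrix (Fin k) (Fin k) ℝ) := Matrix.linftyOpNormedRing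
  letI : NormedAlgebra ℝ (Matrix (Fin k) (Fin k) ℝ) := Matrix.linftyOpNormedAlgebra
  set B : Matrix (Fin k) (Fin k) ℝ := -Φ with hB
  have hrw : ∀ s : ℝ, (-s) • Φ = s • B := by intro s; rw [hB, smul_neg, neg_smul]
  set x : Fin k → ℝ := Pi.single j 1 with hx
  set u : ℝ → Fin k → ℝ := fun s => (NormedSpace.exp (s • B)).mulVec x with hu
  have hder : ∀ (l : Fin k) (s : ℝ), HasDerivAt (fun t => u t l) ((B.mulVec (u s)) l) s := by
    intro l s
    have hM : HasDerivAt (fun t : ℝ => NormedSpace.exp (t • B))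
        (B * NormedSpace.exp (s • B)) s := hasDerivAt_exp_smul_const' B s
    have h2 := (evCLM x l).hasFDerivAt.comp_hasDerivAt s hM
    rw [show B.mulVec (u s) = (B * NormedSpace.exp (s • B)).mulVec x by simp [hu, Matrix.mulVec_mulVec]]
    exact h2
  set g : ℝ → ℝ := fun s => ∑ l, (u s l) ^ 2 with hg
  have hgder : ∀ s, HasDerivAt g (∑ l, 2 * u s l * (B.mulVec (u s)) l) s := by
    intro s
    apply HasDerivAt.fun_sum
    intro l _
    have := (hder l s).pow 2
    simpa [Pi.pow_def, pow_one, mul_assoc, mul_comm, mul_left_comm] using this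
  have hgbound : ∀ s, (∑ l, 2 * u s l * (B.mulVec (u s)) l) ≤ -(2*c) * g s := by
    intro s
    have h1 : (∑ l, 2 * u s l * (B.mulVec (u s)) l) = 2 * (u s ⬝ᵥ B.mulVec (u s)) := by
      rw [dotProduct, Finset.mul_sum]
      apply Finset.sum_congr rfl
      intro l _; ring
    have h2 : u s ⬝ᵥ B.mulVec (u s) = -(u s ⬝ᵥ Φ.mulVec (u s)) := by
      rw [hB, Matrix.neg_mulVec, dotProduct_neg]
    have h3 : c * g s ≤ u s ⬝ᵥ Φ.mulVec (u s) := hco (u s)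
    rw [h1, h2]
    nlinarith
  set h : ℝ → ℝ := fun s => Real.exp (2*c*s) * g s with hh
  have hhder : ∀ s, HasDerivAt h (2*c*Real.exp (2*c*s) * g s
      + Real.exp (2*c*s) * (∑ l, 2 * u s l * (B.mulVec (u s)) l)) s := by
    intro s
    have he : HasDerivAt (fun t : ℝ => Real.exp (2*c*t)) (2*c*Real.exp (2*c*s)) s := by
      have h0 : HasDerivAt (fun t : ℝ => 2*c*t) (2*c) s := by
        simpa using (hasDerivAt_id s).const_mul (2*c)
      simpa [mul_comm] using h0.exp
    simpa [Pi.mul_def] using he.mul (hgder s)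
  have hgnonneg : ∀ s, 0 ≤ g s := fun s => Finset.sum_nonneg fun l _ => sq_nonneg _
  have hmono : Antitone h := by
    apply antitone_of_deriv_nonpos
    · intro s; exact (hhder s).differentiableAt
    · intro s
      rw [(hhder s).deriv]
      have h1 := hgbound s
      have h2 := hgnonneg s
      have h3 := (Real.exp_pos (2*c*s)).le
      nlinarith [mul_le_mul_of_nonneg_left h1 h3]
  have hbound : ∀ s : ℝ, 0 ≤ s → g s ≤ Real.exp (-(2*c*s)) * g 0 := by
    intro s hs
    have h1 : h s ≤ h 0 := hmono hs
    simp only [hh, mul_zero, Real.exp_zero, one_mul] at h1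
    have h2 : Real.exp (2*c*s) * g s ≤ g 0 := h1
    have h3 : 0 < Real.exp (2*c*s) := Real.exp_pos _
    rw [Real.exp_neg]
    rw [inv_mul_eq_div, le_div_iff₀ h3]
    linarith [h2]
  have hentry : ∀ s : ℝ, NormedSpace.exp ((-s) • Φ) i j = u s i := by
    intro s
    rw [hrw]
    simp [hu, hx]
  have hxsq : ∀ s : ℝ, 0 ≤ s → |u s i| ≤ Real.sqrt (g 0) * Real.exp (-(c*s)) := by
    intro s hs
    have h1 : (u s i)^2 ≤ g s := Finset.single_le_sum (f := fun l => (u s l)^2)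
      (fun l _ => sq_nonneg _) (Finset.mem_univ i)
    have h2 : (u s i)^2 ≤ Real.exp (-(2*c*s)) * g 0 := h1.trans (hbound s hs)
    have h3 : |u s i| ≤ Real.sqrt (Real.exp (-(2*c*s)) * g 0) := by
      rw [← Real.sqrt_sq_eq_abs]
      exact Real.sqrt_le_sqrt h2
    have h4 : Real.sqrt (Real.exp (-(2*c*s)) * g 0)
        = Real.exp (-(c*s)) * Real.sqrt (g 0) := by
      rw [Real.sqrt_mul (Real.exp_nonneg _)]
      congr 1
      rw [show -(2*c*s) = (-(c*s)) + (-(c*s)) by ring, Real.exp_add,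
        Real.sqrt_mul_self (Real.exp_nonneg _)]
    rw [h4] at h3
    linarith [h3]
  have hev : ∀ᶠ s : ℝ in atTop, ‖NormedSpace.exp ((-s) • Φ) i j‖
      ≤ Real.sqrt (g 0) * Real.exp (-(c*s)) := by
    filter_upwards [eventually_ge_atTop (0:ℝ)] with s hs
    rw [hentry s, Real.norm_eq_abs]
    exact hxsq s hs
  have hlim : Tendsto (fun s : ℝ => Real.sqrt (g 0) * Real.exp (-(c*s))) atTop (nhds 0) := by
    have h1 : Tendsto (fun s : ℝ => c * s) atTop atTop := tendsto_id.const_mul_atTop hc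
    have h2 : Tendsto (fun s : ℝ => Real.exp (-(c*s))) atTop (nhds 0) :=
      Real.tendsto_exp_neg_atTop_nhds_zero.comp h1
    simpa using h2.const_mul (Real.sqrt (g 0))
  exact squeeze_zero_norm' hev hlim

lemma tendsto_entry {d k : ℕ} (X : Matrix (Fin d) (Fin k) ℝ) (R : Matrix (Fin k) (Fin d) ℝ)
    (E : ℝ → Matrix (Fin k) (Fin k) ℝ)
    (hE : ∀ p q, Tendsto (fun s => E s p q) atTop (nhds 0)) (i : Fin d) (j : Fin d) :
    Tendsto (fun s => (X * E s * R) i j) atTop (nhds 0) := by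
  have hrw : ∀ s, (X * E s * R) i j = ∑ p, ∑ q, X i p * E s p q * R q j := by
    intro s
    simp only [Matrix.mul_apply, Finset.sum_mul]
    rw [Finset.sum_comm]
  have h0 : Tendsto (fun s => ∑ p, ∑ q, X i p * E s p q * R q j) atTop (nhds 0) := by
    have : Tendsto (fun s => ∑ p, ∑ q, X i p * E s p q * R q j) atTop
        (nhds (∑ p : Fin k, ∑ q : Fin k, X i p * (0:ℝ) * R q j)) := by
      apply tendsto_finset_sum
      intro p _
      apply tendsto_finset_sum
      intro q _
      exact (Tendsto.const_mul (X i p) (hE p q)).mul_const (R q j)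
    simpa using this
  exact h0.congr fun s => (hrw s).symm

/-- With `Γ := (a-A)MMᵀ`, `Φ := Mᵀ(a-A)M` and `P := I - (a-A)MΦ⁻¹Mᵀ`, one has
`e^{-sΓ} = P + (a-A)M e^{-sΦ} Φ⁻¹Mᵀ` for all `s ≥ 0`, and `e^{-sΓ} → P` as `s → ∞`
(entrywise). -/
theorem stmt17 {d k : ℕ} (a A : Matrix (Fin d) (Fin d) ℝ) (M : Matrix (Fin d) (Fin k) ℝ)
    (ha : a.PosDef) (hA : Aᵀ = -A) (hM : Function.Injective M.mulVec)
    (P : Matrix (Fin d) (Fin d) ℝ)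
    (hP : P = 1 - (a - A) * M * (Mᵀ * (a - A) * M)⁻¹ * Mᵀ) :
    (∀ s : ℝ, 0 ≤ s →
      NormedSpace.exp ((-s) • ((a - A) * M * Mᵀ))
        = P + (a - A) * M * NormedSpace.exp ((-s) • (Mᵀ * (a - A) * M))
            * (Mᵀ * (a - A) * M)⁻¹ * Mᵀ) ∧
    (∀ i j : Fin d,
      Filter.Tendsto (fun s : ℝ => NormedSpace.exp ((-s) • ((a - A) * M * Mᵀ)) i j)
        Filter.atTop (nhds (P i j))) := by
  have hYX : Mᵀ * (a - A) * M = Mᵀ * ((a - A) * M) := Matrix.mul_assoc _ _ _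
  have hdet : IsUnit (Mᵀ * (a - A) * M).det := phi_isUnit a A M ha hA hM
  have hdet' : IsUnit (Mᵀ * ((a - A) * M)).det := hYX ▸ hdet
  have hid : ∀ s : ℝ,
      NormedSpace.exp ((-s) • ((a - A) * M * Mᵀ))
        = P + (a - A) * M * NormedSpace.exp ((-s) • (Mᵀ * (a - A) * M))
            * (Mᵀ * (a - A) * M)⁻¹ * Mᵀ := by
    intro s
    rw [hP, hYX]
    exact key_identity ((a - A) * M) Mᵀ hdet' (-s)
  refine ⟨fun s _ => hid s, fun i j => ?_⟩
  obtain ⟨c, hc, hco⟩ := coercive (Mᵀ * (a - A) * M)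
    (fun x hx => quad_pos a A M ha hA hM x hx)
  have hd := decay (Mᵀ * (a - A) * M) hc hco
  have hten := tendsto_entry ((a - A) * M) ((Mᵀ * (a - A) * M)⁻¹ * Mᵀ)
    (fun s => NormedSpace.exp ((-s) • (Mᵀ * (a - A) * M))) hd i j
  have heq : ∀ s : ℝ, NormedSpace.exp ((-s) • ((a - A) * M * Mᵀ)) i j
      = P i j + ((a - A) * M * NormedSpace.exp ((-s) • (Mᵀ * (a - A) * M))
          * ((Mᵀ * (a - A) * M)⁻¹ * Mᵀ)) i j := by
    intro s
    rw [hid s, ← Matrix.mul_assoc, Matrix.add_apply]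
  have hfin := hten.const_add (P i j)
  rw [add_zero] at hfin
  exact hfin.congr fun s => (heq s).symm
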